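/- Let T be a finite group and k ≥ 4 an integer with k + 1 ≤ |T|. Then Q_k(T) ≤ 1 − P_{k+1}(T), where Q_k(T) is the proportion of k-subsets of T ∖ {1} with non-trivial setwise stabiliser in Aut(T), and P_{k+1}(T) = |{(t₁,...,t_k) ∈ T^k : t₁,...,t_k ∈ T∖{1} are pairwise distinct and the setwise stabiliser of {t₁,...,t_k,1} in Hol(T) is trivial}| / |T|^k. -/

import Mathlib

abbrev Hol (T : Type*) [Group T] : Type _ :=
  SemidirectProduct T (MulAut T) (MonoidHom.id (MulAut T))

instance holMulAction {T : Type*} [Group T] : MulAction (Hol T) T where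
  smul σ t := σ.left * σ.right t
  one_smul t := by
    show (1 : Hol T).left * (1 : Hol T).right t = t
    simp
  mul_smul a b t := by
    show (a * b).left * (a * b).right t = a.left * a.right (b.left * b.right t)
    simp [SemidirectProduct.mul_left, SemidirectProduct.mul_right, mul_assoc]

theorem auxB19 {T : Type*} [Group T] [Fintype T] [DecidableEq T] (k : ℕ) :
    Nat.card {t : Fin k → T // Function.Injective t ∧ (∀ i, t i ≠ 1) ∧
        ∀ (g : T) (α : MulAut T),
          (fun x => α (g⁻¹ * x)) '' (Set.range t ∪ {1}) = Set.range t ∪ {1} →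
          g = 1 ∧ α = 1} ≤
    Nat.card {R : Finset T // ↑R ⊆ {x : T | x ≠ 1} ∧ R.card = k ∧
        ∀ α : MulAut T, α '' ↑R = ↑R → α = 1} * Nat.factorial k := by
  classical
  set P := {t : Fin k → T // Function.Injective t ∧ (∀ i, t i ≠ 1) ∧
        ∀ (g : T) (α : MulAut T),
          (fun x => α (g⁻¹ * x)) '' (Set.range t ∪ {1}) = Set.range t ∪ {1} →
          g = 1 ∧ α = 1} with hP
  set Dsub := {R : Finset T // ↑R ⊆ {x : T | x ≠ 1} ∧ R.card = k ∧
        ∀ α : MulAut T, α '' ↑R = ↑R → α = 1} with hDsub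
  have key : Nat.card P ≤ Nat.card (Dsub × Equiv.Perm (Fin k)) := by
    have hRcoe : ∀ t : P, ((Finset.image t.1 Finset.univ : Finset T) : Set T)
        = Set.range t.1 := by
      intro t; simp
    have hRk : ∀ t : P, (Finset.image t.1 Finset.univ).card = k := by
      intro t
      rw [Finset.card_image_of_injective _ t.2.1, Finset.card_univ, Fintype.card_fin]
    have hprops : ∀ t : P, ↑(Finset.image t.1 Finset.univ) ⊆ {x : T | x ≠ 1} ∧
        (Finset.image t.1 Finset.univ).card = k ∧
        ∀ α : MulAut T, α '' ↑(Finset.image t.1 Finset.univ) = ↑(Finset.image t.1 Finset.univ)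
          → α = 1 := by
      intro t
      refine ⟨?_, hRk t, ?_⟩
      · intro x hx
        rw [hRcoe t] at hx
        obtain ⟨i, rfl⟩ := hx
        exact t.2.2.1 i
      · intro α hα
        refine (t.2.2.2 1 α ?_).2
        have h1 : (fun x => α ((1 : T)⁻¹ * x)) = fun x => α x := by
          funext x; simp
        rw [h1, Set.image_union, ← hRcoe t, hα, hRcoe t]
        simp
    let e : ∀ t : P, Fin k ≃ ↥(Finset.image t.1 Finset.univ) := fun t =>
      Equiv.ofBijective (fun i => ⟨t.1 i, by simp⟩)
        (by
          constructor
          · intro i j hij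
            exact t.2.1 (congrArg Subtype.val hij)
          · rintro ⟨x, hx⟩
            simp only [Finset.mem_image, Finset.mem_univ, true_and] at hx
            obtain ⟨i, hi⟩ := hx
            exact ⟨i, Subtype.ext hi⟩)
    let Φ : P → Dsub × Equiv.Perm (Fin k) := fun t =>
      (⟨Finset.image t.1 Finset.univ, hprops t⟩,
        (e t).trans (Finset.equivFinOfCardEq (hRk t)))
    apply Nat.card_le_card_of_injective Φ
    intro t s hts
    have hR : Finset.image t.1 Finset.univ = Finset.image s.1 Finset.univ :=
      congrArg (fun p => p.1.1) hts
    have hperm := congrArg Prod.snd hts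
    apply Subtype.ext
    funext i
    have h1 := congrFun (congrArg (fun (p : Equiv.Perm (Fin k)) => ⇑p) hperm) i
    simp only [Φ, Equiv.trans_apply] at h1
    -- rewrite the codomain of s's equiv using hR
    have h2 : ∀ (R₁ R₂ : Finset T) (hEq : R₂ = R₁) (h₁ : R₁.card = k) (h₂ : R₂.card = k)
        (x : ↥R₁) (y : ↥R₂),
        (Finset.equivFinOfCardEq h₁) x = (Finset.equivFinOfCardEq h₂) y →
        (x : T) = (y : T) := by
      rintro R₁ R₂ rfl h₁ h₂ x y hxy
      have : x = y := (Finset.equivFinOfCardEq h₁).injective hxy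
      rw [this]
    exact h2 _ _ hR.symm (hRk t) (hRk s) _ _ h1
  calc Nat.card P ≤ Nat.card (Dsub × Equiv.Perm (Fin k)) := key
    _ = Nat.card Dsub * Nat.factorial k := by
        rw [Nat.card_prod, Nat.card_eq_fintype_card (α := Equiv.Perm (Fin k)),
          Fintype.card_perm, Fintype.card_fin]

theorem stmt19 {T : Type*} [Group T] [Fintype T] [DecidableEq T] (k : ℕ)
    (hk : 4 ≤ k) (hk2 : k + 1 ≤ Fintype.card T) :
    (Nat.card {R : Finset T // ↑R ⊆ {x : T | x ≠ 1} ∧ R.card = k ∧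
        ∃ α : MulAut T, α ≠ 1 ∧ α '' ↑R = ↑R} : ℝ) /
      ((Fintype.card T - 1).choose k : ℝ) ≤
    1 - (Nat.card {t : Fin k → T // Function.Injective t ∧ (∀ i, t i ≠ 1) ∧
        ∀ (g : T) (α : MulAut T),
          (fun x => α (g⁻¹ * x)) '' (Set.range t ∪ {1}) = Set.range t ∪ {1} →
          g = 1 ∧ α = 1} : ℝ) / (Fintype.card T : ℝ) ^ k := by
  classical
  set n := Fintype.card T with hn
  set C := (n - 1).choose k with hC
  set pD : Finset T → Prop := fun R => ↑R ⊆ {x : T | x ≠ 1} ∧ R.card = k ∧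
      ∀ α : MulAut T, α '' ↑R = ↑R → α = 1 with hpD
  set pA : Finset T → Prop := fun R => ↑R ⊆ {x : T | x ≠ 1} ∧ R.card = k ∧
      ∃ α : MulAut T, α ≠ 1 ∧ α '' ↑R = ↑R with hpA
  letI instA : DecidablePred pA := fun _ => Classical.propDecidable _
  letI instD : DecidablePred pD := fun _ => Classical.propDecidable _
  set A := Nat.card {R : Finset T // pA R} with hA
  set D := Nat.card {R : Finset T // pD R} with hD
  set B := Nat.card {t : Fin k → T // Function.Injective t ∧ (∀ i, t i ≠ 1) ∧
        ∀ (g : T) (α : MulAut T),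
          (fun x => α (g⁻¹ * x)) '' (Set.range t ∪ {1}) = Set.range t ∪ {1} →
          g = 1 ∧ α = 1} with hB
  -- Step 1: A + D ≤ C
  have hAD : A + D ≤ C := by
    have hcardA : A = (Finset.univ.filter pA).card := by
      rw [hA, Nat.card_eq_fintype_card, Fintype.card_subtype]
    have hcardD : D = (Finset.univ.filter pD).card := by
      rw [hD, Nat.card_eq_fintype_card, Fintype.card_subtype]
    have hsubA : Finset.univ.filter pA ⊆ ((Finset.univ : Finset T).erase 1).powersetCard k := by
      intro R hR
      simp only [Finset.mem_filter, Finset.mem_univ, true_and] at hR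
      rw [Finset.mem_powersetCard]
      exact ⟨fun x hx => Finset.mem_erase.2 ⟨hR.1 hx, Finset.mem_univ x⟩, hR.2.1⟩
    have hsubD : Finset.univ.filter pD ⊆ ((Finset.univ : Finset T).erase 1).powersetCard k := by
      intro R hR
      simp only [Finset.mem_filter, Finset.mem_univ, true_and] at hR
      rw [Finset.mem_powersetCard]
      exact ⟨fun x hx => Finset.mem_erase.2 ⟨hR.1 hx, Finset.mem_univ x⟩, hR.2.1⟩
    have hdisj : Disjoint (Finset.univ.filter pA) (Finset.univ.filter pD) := by
      rw [Finset.disjoint_filter]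
      rintro R - ⟨-, -, α, hα, hαR⟩ ⟨-, -, htriv⟩
      exact hα (htriv α hαR)
    have hle := Finset.card_le_card (Finset.union_subset hsubA hsubD)
    rw [Finset.card_union_of_disjoint hdisj] at hle
    rw [hcardA, hcardD]
    calc (Finset.univ.filter pA).card + (Finset.univ.filter pD).card
        ≤ (((Finset.univ : Finset T).erase 1).powersetCard k).card := hle
      _ = C := by
          rw [Finset.card_powersetCard, Finset.card_erase_of_mem (Finset.mem_univ 1),
            Finset.card_univ]
  -- Step 2: B ≤ D * k!
  have hBD : B ≤ D * Nat.factorial k := auxB19 k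
  -- Step 3: C * k! ≤ n ^ k
  have hCk : C * Nat.factorial k ≤ n ^ k := by
    calc C * Nat.factorial k = Nat.factorial k * C := Nat.mul_comm _ _
      _ = (n - 1).descFactorial k := (Nat.descFactorial_eq_factorial_mul_choose _ _).symm
      _ ≤ (n - 1) ^ k := Nat.descFactorial_le_pow _ _
      _ ≤ n ^ k := Nat.pow_le_pow_left (Nat.sub_le _ _) _
  -- Step 4: arithmetic
  have hCpos : 0 < C := Nat.choose_pos (Nat.le_sub_one_of_lt hk2)
  have hCR : (0:ℝ) < (C:ℝ) := by exact_mod_cast hCpos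
  have hnpos : 0 < n := Nat.lt_of_lt_of_le (Nat.succ_pos k) hk2
  have hnR : (0:ℝ) < (n:ℝ) ^ k := by positivity
  have key : (B:ℝ) / (n:ℝ) ^ k ≤ (D:ℝ) / (C:ℝ) := by
    rw [div_le_div_iff₀ hnR hCR]
    have hnat : B * C ≤ D * n ^ k := by
      calc B * C ≤ (D * Nat.factorial k) * C := Nat.mul_le_mul hBD le_rfl
        _ = D * (C * Nat.factorial k) := by ring
        _ ≤ D * n ^ k := Nat.mul_le_mul le_rfl hCk
    exact_mod_cast hnat
  have key2 : (A:ℝ) / (C:ℝ) + (D:ℝ) / (C:ℝ) ≤ 1 := by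
    rw [← add_div, div_le_one hCR]
    exact_mod_cast hAD
  linarith
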